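/- A reduced commutative Noetherian ring R embeds (as an R-module) into any ideal I of R having the same set of associated primes as R. More precisely, if I is an ideal such that Ass(R/0) ⊆ Ass_R(I), then there is an injective R-module homomorphism R → I. -/

import Mathlib

/-- A reduced Noetherian ring embeds, as a module, into any ideal having the same
associated primes: if every associated prime of `R` is associated to `I`, then
there is an injective `R`-linear map `R → I`. -/
theorem stmt_10 {R : Type*} [CommRing R] [IsNoetherianRing R] [IsReduced R]
    (I : Ideal R) (h : associatedPrimes R R ⊆ associatedPrimes R I) :
    ∃ φ : R →ₗ[R] I, Function.Injective φ := by
  cases subsingleton_or_nontrivial R with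
  | inl hs => exact ⟨0, fun a b _ => Subsingleton.elim a b⟩
  | inr hnt =>
  by_cases hK : ∃ x : I, ∀ r : R, r • x = 0 → r = 0
  · obtain ⟨x, hx⟩ := hK
    refine ⟨LinearMap.toSpanSingleton R I x, fun a b hab => ?_⟩
    have hab' : (a - b) • x = 0 := by
      rw [sub_smul]
      simpa [LinearMap.toSpanSingleton_apply, sub_eq_zero] using hab
    have := hx _ hab'
    exact sub_eq_zero.mp this
  -- every element of I is a zero divisor; derive a contradiction
  exfalso
  push_neg at hK
  -- Step 1: associated primes of R are minimal primes, hence finitely many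
  have hass : associatedPrimes R R ⊆ minimalPrimes R := by
    rintro p hp0
    obtain ⟨hp, x, rfl⟩ := isAssociatedPrime_iff.mp hp0
    rw [Submodule.bot_colon'] at hp ⊢
    have hx0 : x ≠ 0 := by
      rintro rfl
      exact hp.ne_top
        (by rw [Submodule.span_singleton_eq_bot.mpr rfl, Submodule.annihilator_bot])
    have hxnil : x ∉ nilradical R := by
      rw [nilradical_eq_zero, Ideal.zero_eq_bot, Ideal.mem_bot]; exact hx0
    rw [nilradical_eq_sInf, Submodule.mem_sInf] at hxnil
    push_neg at hxnil
    obtain ⟨p', hp', hxp'⟩ := hxnil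
    haveI : Ideal.IsPrime p' := hp'
    obtain ⟨q, hq, hqle⟩ := Ideal.exists_minimalPrimes_le (I := (⊥ : Ideal R)) (J := p') bot_le
    have hq' : q.IsPrime := hq.1.1
    have hxq : x ∉ q := fun hxq => hxp' (hqle hxq)
    have hle : (Submodule.span R {x}).annihilator ≤ q := by
      intro r hr
      rw [Submodule.mem_annihilator_span_singleton] at hr
      have hrq : r * x ∈ q := by rw [smul_eq_mul] at hr; rw [hr]; exact q.zero_mem
      exact (hq'.mem_or_mem hrq).resolve_right hxq
    have hge : q ≤ (Submodule.span R {x}).annihilator := hq.2 ⟨hp, bot_le⟩ hle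
    have : (Submodule.span R {x}).annihilator = q := le_antisymm hle hge
    rw [this]; exact hq
  have hfin : (associatedPrimes R R).Finite :=
    (minimalPrimes.finite_of_isNoetherianRing R).subset hass
  -- Step 2: I is contained in the union of the associated primes of R
  have hsub : (I : Set R) ⊆ ⋃ p ∈ associatedPrimes R R, (p : Set R) := by
    rw [biUnion_associatedPrimes_eq_zero_divisors R R]
    intro y hy
    obtain ⟨r, hr, hr0⟩ := hK ⟨y, hy⟩
    refine ⟨r, hr0, ?_⟩
    have : r * y = 0 := by
      have := congrArg (Subtype.val) hr
      simpa using this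
    rw [smul_eq_mul, mul_comm]
    exact this
  -- Step 3: prime avoidance gives I ≤ p for some associated prime p
  classical
  have hsub' : (I : Set R) ⊆ ⋃ p ∈ (hfin.toFinset : Set (Ideal R)), (id p : Ideal R) := by
    intro y hy
    obtain ⟨s, ⟨p, rfl⟩, hps⟩ := hsub hy
    simp only [Set.mem_iUnion] at hps ⊢
    obtain ⟨hpmem, hyp⟩ := hps
    exact ⟨p, hfin.mem_toFinset.mpr hpmem, hyp⟩
  have havoid := (Ideal.subset_union_prime (s := hfin.toFinset) (f := id) ⊥ ⊥
    (fun i hi _ _ => (show IsAssociatedPrime i R from hfin.mem_toFinset.mp hi).1)).mp hsub'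
  obtain ⟨p, hps, hIp⟩ := havoid
  have hpAss : p ∈ associatedPrimes R R := hfin.mem_toFinset.mp hps
  -- Step 4: p is associated to I, giving x ∈ I with annihilator p;
  -- then x ∈ p forces x² = 0, so x = 0 by reducedness, contradiction.
  obtain ⟨hp, x, hxe⟩ := isAssociatedPrime_iff.mp (h hpAss)
  rw [Submodule.bot_colon'] at hxe
  have hx1 : (x : R) ∈ p := hIp x.2
  rw [hxe, Submodule.mem_annihilator_span_singleton] at hx1
  have hsq : (x : R) * (x : R) = 0 := by
    have := congrArg (Subtype.val) hx1
    simpa using this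
  have hx0 : (x : R) = 0 := IsReduced.eq_zero _ ⟨2, by rw [pow_two]; exact hsq⟩
  have : x = 0 := Subtype.ext hx0
  rw [this, Submodule.span_singleton_eq_bot.mpr rfl, Submodule.annihilator_bot] at hxe
  exact hp.ne_top hxe
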